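/- For every n ≥ 1 and every 1 ≤ t ≤ n, there exists a t-dimensional linear code C ⊆ F_2^n such that for all 1 ≤ k ≤ n, the number A_k of weight-k codewords of C satisfies A_k · 2^(n-t) < (n+1)·binom(n,k); equivalently ε(C) ≤ n+1, so the permuted code family {σ(C) : σ ∈ S_n} is (n+1)-almost universal_2. -/

import Mathlib

open scoped Classical

noncomputable def pr {I : Type*} [Fintype I] (P : I → Prop) : ℝ :=
  ((Finset.univ.filter P).card : ℝ) / (Fintype.card I : ℝ)

noncomputable def wt {n : ℕ} (x : Fin n → ZMod 2) : ℕ :=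
  (Finset.univ.filter (fun i => x i ≠ 0)).card

noncomputable def permCode {n : ℕ} (σ : Equiv.Perm (Fin n))
    (C : Submodule (ZMod 2) (Fin n → ZMod 2)) : Submodule (ZMod 2) (Fin n → ZMod 2) :=
  C.map (LinearMap.funLeft (ZMod 2) (ZMod 2) σ)

/-- Number of codewords of `C` of Hamming weight `k`. -/
noncomputable def wtCount {n : ℕ} (C : Submodule (ZMod 2) (Fin n → ZMod 2)) (k : ℕ) : ℕ :=
  (Finset.univ.filter (fun c : Fin n → ZMod 2 => c ∈ C ∧ wt c = k)).card

namespace Stmt10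

lemma zmod2_eq_one : ∀ {a : ZMod 2}, a ≠ 0 → a = 1 := by decide
lemma zmod2_eq_zero {a : ZMod 2} (h : ¬ a ≠ 0) : a = 0 := by simpa using h

variable {n t m : ℕ}

def se (h : t + m = n) : Fin n ≃ (Fin t) ⊕ (Fin m) := (finCongr h.symm).trans finSumFinEquiv.symm

noncomputable def encL (h : t + m = n) (G : Matrix (Fin t) (Fin m) (ZMod 2)) :
    (Fin t → ZMod 2) →ₗ[ZMod 2] (Fin n → ZMod 2) where
  toFun u := fun i => Sum.elim u (Matrix.vecMul u G) (se h i)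
  map_add' u v := by
    funext i
    rcases hh : se h i with a | b <;> simp [hh, Matrix.add_vecMul]
  map_smul' c u := by
    funext i
    rcases hh : se h i with a | b <;> simp [hh, Matrix.smul_vecMul]

lemma encL_apply (h : t + m = n) (G : Matrix (Fin t) (Fin m) (ZMod 2)) (u : Fin t → ZMod 2)
    (i : Fin n) : encL h G u i = Sum.elim u (Matrix.vecMul u G) (se h i) := rfl

lemma encL_inj (h : t + m = n) (G : Matrix (Fin t) (Fin m) (ZMod 2)) :
    Function.Injective (encL h G) := by
  intro u v huv
  funext a
  have := congrFun huv ((se h).symm (.inl a))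
  simpa [encL_apply] using this

noncomputable def codeOf (h : t + m = n) (G : Matrix (Fin t) (Fin m) (ZMod 2)) :
    Submodule (ZMod 2) (Fin n → ZMod 2) := LinearMap.range (encL h G)

/-- the two halves of a vector -/
noncomputable def x1 (h : t + m = n) (x : Fin n → ZMod 2) : Fin t → ZMod 2 :=
  fun a => x ((se h).symm (.inl a))
noncomputable def x2 (h : t + m = n) (x : Fin n → ZMod 2) : Fin m → ZMod 2 :=
  fun b => x ((se h).symm (.inr b))

lemma encL_eq_iff (h : t + m = n) (G : Matrix (Fin t) (Fin m) (ZMod 2))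
    (u : Fin t → ZMod 2) (x : Fin n → ZMod 2) :
    encL h G u = x ↔ u = x1 h x ∧ Matrix.vecMul (x1 h x) G = x2 h x := by
  constructor
  · rintro rfl
    have h1 : x1 h (encL h G u) = u := by funext a; simp [x1, encL_apply]
    refine ⟨h1.symm, ?_⟩
    rw [h1]; funext b; simp [x2, encL_apply]
  · rintro ⟨rfl, h2⟩
    funext i
    rcases hh : se h i with a | b
    · have : i = (se h).symm (.inl a) := by
        rw [← hh]; simp
      simp [encL_apply, hh, x1, this]
    · have : i = (se h).symm (.inr b) := by
        rw [← hh]; simp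
      simp [encL_apply, hh, h2, x2, this]

lemma mem_codeOf (h : t + m = n) (G : Matrix (Fin t) (Fin m) (ZMod 2)) (x : Fin n → ZMod 2) :
    x ∈ codeOf h G ↔ Matrix.vecMul (x1 h x) G = x2 h x := by
  constructor
  · rintro ⟨u, rfl⟩
    exact ((encL_eq_iff h G u _).1 rfl).2
  · intro hx
    exact ⟨x1 h x, (encL_eq_iff h G _ x).2 ⟨rfl, hx⟩⟩



lemma wt_zero : wt (0 : Fin n → ZMod 2) = 0 := by simp [wt]

lemma ne_zero_of_wt (x : Fin n → ZMod 2) {k : ℕ} (hk : 1 ≤ k) (h : wt x = k) : x ≠ 0 := by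
  rintro rfl; rw [wt_zero] at h; omega

lemma card_wt_le (k : ℕ) :
    (Finset.univ.filter (fun x : Fin n → ZMod 2 => wt x = k)).card ≤ Nat.choose n k := by
  have := Finset.card_le_card_of_injOn
    (f := fun x : Fin n → ZMod 2 => Finset.univ.filter (fun i => x i ≠ 0))
    (s := Finset.univ.filter (fun x : Fin n → ZMod 2 => wt x = k))
    (t := Finset.powersetCard k (Finset.univ : Finset (Fin n)))
    (by intro x hx
        simp only [Finset.mem_coe, Finset.mem_filter] at hx
        rw [Finset.mem_coe, Finset.mem_powersetCard]
        exact ⟨Finset.filter_subset _ _ |>.trans (by simp), hx.2⟩)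
    (by intro x hx y hy hxy
        dsimp only at hxy
        funext i
        by_cases h : x i ≠ 0
        · have : i ∈ Finset.univ.filter (fun i => x i ≠ 0) := by simp [h]
          rw [hxy] at this
          simp only [Finset.mem_filter] at this
          rw [zmod2_eq_one h, zmod2_eq_one this.2]
        · have h0 : x i = 0 := by simpa using h
          have : i ∉ Finset.univ.filter (fun i => y i ≠ 0) := by rw [← hxy]; simp [h0]
          simp only [Finset.mem_filter, Finset.mem_univ, true_and, not_not] at this
          rw [h0, this])
  simpa [Finset.card_powersetCard] using this

lemma choose_le_card_wt (k : ℕ) :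
    Nat.choose n k ≤ (Finset.univ.filter (fun x : Fin n → ZMod 2 => wt x = k)).card := by
  have := Finset.card_le_card_of_injOn
    (f := fun s : Finset (Fin n) => (fun i => if i ∈ s then (1 : ZMod 2) else 0))
    (s := Finset.powersetCard k (Finset.univ : Finset (Fin n)))
    (t := Finset.univ.filter (fun x : Fin n → ZMod 2 => wt x = k))
    (by intro s hs
        rw [Finset.mem_coe, Finset.mem_powersetCard] at hs
        simp only [Finset.mem_coe, Finset.mem_filter, Finset.mem_univ, true_and]
        rw [← hs.2]
        unfold wt
        congr 1
        ext i
        by_cases h : i ∈ s <;> simp [h])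
    (by intro s hs u hu hsu
        dsimp only at hsu
        ext i
        constructor
        · intro hi
          by_contra hi2
          have := congrFun hsu i
          simp [hi, hi2] at this
        · intro hi
          by_contra hi2
          have := congrFun hsu i
          simp [hi, hi2] at this)
  simpa [Finset.card_powersetCard] using this


lemma count_G_aux (x1 : Fin t → ZMod 2) (x2 : Fin m → ZMod 2) (h1 : x1 ≠ 0) :
    (Finset.univ.filter (fun G : Matrix (Fin t) (Fin m) (ZMod 2) =>
      Matrix.vecMul x1 G = x2)).card ≤ 2 ^ ((t-1)*m) := by
  obtain ⟨a, ha⟩ : ∃ a, x1 a ≠ 0 := by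
    by_contra hc
    push_neg at hc
    exact h1 (funext hc)
  have ha1 : x1 a = 1 := by revert ha; generalize x1 a = c; revert c; decide
  have hcard : Fintype.card ({a' : Fin t // a' ≠ a} → Fin m → ZMod 2) = 2 ^ ((t-1)*m) := by
    rw [Fintype.card_fun, Fintype.card_fun]
    have : Fintype.card {a' : Fin t // a' ≠ a} = t - 1 := by
      simp [Fintype.card_subtype_compl]
    rw [this]
    simp [← pow_mul, mul_comm]
  rw [← hcard, ← Finset.card_univ]
  apply Finset.card_le_card_of_injOn
    (f := fun G (p : {a' : Fin t // a' ≠ a}) (b : Fin m) => G p.1 b)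
  · intro G _; exact Finset.mem_univ _
  · intro G hG G' hG' hGG'
    simp only [Finset.coe_filter, Set.mem_setOf_eq, Finset.mem_univ, true_and] at hG hG'
    dsimp only at hGG'
    have hoff : ∀ a' ≠ a, ∀ b, G a' b = G' a' b := fun a' h' b =>
      congrFun (congrFun hGG' ⟨a', h'⟩) b
    ext a' b
    by_cases h' : a' = a
    · subst h'
      have e1 := congrFun hG b
      have e2 := congrFun hG' b
      simp only [Matrix.vecMul, dotProduct] at e1 e2
      rw [← Finset.add_sum_erase _ _ (Finset.mem_univ a')] at e1 e2
      have : ∑ a'' ∈ Finset.univ.erase a', x1 a'' * G a'' b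
           = ∑ a'' ∈ Finset.univ.erase a', x1 a'' * G' a'' b := by
        apply Finset.sum_congr rfl
        intro a'' ha''
        rw [hoff a'' (Finset.ne_of_mem_erase ha'')]
      rw [this] at e1
      have := e1.trans e2.symm
      rw [ha1, one_mul, one_mul] at this
      exact add_right_cancel this
    · exact hoff a' h' b

lemma count_G (h : t + m = n) (x : Fin n → ZMod 2) (hx : x ≠ 0) :
    (Finset.univ.filter (fun G : Matrix (Fin t) (Fin m) (ZMod 2) =>
      x ∈ codeOf h G)).card ≤ 2 ^ ((t-1)*m) := by
  by_cases h1 : x1 h x = 0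
  · have : (Finset.univ.filter (fun G : Matrix (Fin t) (Fin m) (ZMod 2) =>
        x ∈ codeOf h G)) = ∅ := by
      rw [Finset.filter_eq_empty_iff]
      rintro G - ⟨u, hu⟩
      obtain ⟨rfl, -⟩ := (encL_eq_iff h G u x).1 hu
      rw [h1] at hu
      exact hx (hu.symm.trans (map_zero (encL h G)))
    rw [this]
    simp
  · have heq : (Finset.univ.filter (fun G : Matrix (Fin t) (Fin m) (ZMod 2) =>
        x ∈ codeOf h G)) = (Finset.univ.filter (fun G : Matrix (Fin t) (Fin m) (ZMod 2) =>
        Matrix.vecMul (x1 h x) G = x2 h x)) := by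
      apply Finset.filter_congr
      intro G _
      exact mem_codeOf h G x
    rw [heq]
    exact count_G_aux (x1 h x) (x2 h x) h1


lemma sum_wtCount (h : t + m = n) (k : ℕ) (hk : 1 ≤ k) :
    ∑ G : Matrix (Fin t) (Fin m) (ZMod 2), wtCount (codeOf h G) k
      ≤ Nat.choose n k * 2 ^ ((t-1)*m) := by
  have step1 : ∀ G : Matrix (Fin t) (Fin m) (ZMod 2),
      wtCount (codeOf h G) k
        = ∑ x : Fin n → ZMod 2, if x ∈ codeOf h G ∧ wt x = k then 1 else 0 := by
    intro G
    rw [wtCount, Finset.card_filter]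
  calc ∑ G : Matrix (Fin t) (Fin m) (ZMod 2), wtCount (codeOf h G) k
      = ∑ G : Matrix (Fin t) (Fin m) (ZMod 2), ∑ x : Fin n → ZMod 2,
          if x ∈ codeOf h G ∧ wt x = k then 1 else 0 :=
        Finset.sum_congr rfl (fun G _ => step1 G)
    _ = ∑ x : Fin n → ZMod 2, ∑ G : Matrix (Fin t) (Fin m) (ZMod 2),
          if x ∈ codeOf h G ∧ wt x = k then 1 else 0 := Finset.sum_comm
    _ ≤ ∑ x : Fin n → ZMod 2, (if wt x = k then 2 ^ ((t-1)*m) else 0) := by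
        apply Finset.sum_le_sum
        intro x _
        by_cases hw : wt x = k
        · simp only [hw, and_true, if_true]
          have hxne : x ≠ 0 := ne_zero_of_wt x hk hw
          calc ∑ G : Matrix (Fin t) (Fin m) (ZMod 2), (if x ∈ codeOf h G then 1 else 0)
              = (Finset.univ.filter (fun G : Matrix (Fin t) (Fin m) (ZMod 2) =>
                  x ∈ codeOf h G)).card := (Finset.card_filter _ _).symm
            _ ≤ 2 ^ ((t-1)*m) := count_G h x hxne
        · simp [hw]
    _ = (Finset.univ.filter (fun x : Fin n → ZMod 2 => wt x = k)).card * 2 ^ ((t-1)*m) := by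
        rw [← Finset.sum_filter, Finset.sum_const, smul_eq_mul]
    _ ≤ Nat.choose n k * 2 ^ ((t-1)*m) :=
        Nat.mul_le_mul_right _ (card_wt_le k)


lemma card_matrix : Fintype.card (Matrix (Fin t) (Fin m) (ZMod 2)) = 2 ^ (t*m) := by
  have : Fintype.card (Matrix (Fin t) (Fin m) (ZMod 2))
      = Fintype.card (Fin t → Fin m → ZMod 2) := Fintype.card_congr (Equiv.refl _)
  rw [this, Fintype.card_fun, Fintype.card_fun]
  simp [← pow_mul, Nat.mul_comm]

lemma exists_good_G (h : t + m = n) (ht1 : 1 ≤ t) :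
    ∃ G : Matrix (Fin t) (Fin m) (ZMod 2), ∀ k, 1 ≤ k → k ≤ n →
      (wtCount (codeOf h G) k) * 2 ^ m ≤ n * Nat.choose n k := by
  set F : Matrix (Fin t) (Fin m) (ZMod 2) → ℚ :=
    fun G => ∑ k ∈ Finset.Icc 1 n, (wtCount (codeOf h G) k : ℚ) / (Nat.choose n k : ℚ)
    with hF
  have hsum : ∑ G : Matrix (Fin t) (Fin m) (ZMod 2), F G
      ≤ ∑ G : Matrix (Fin t) (Fin m) (ZMod 2), ((n : ℚ) / 2 ^ m) := by
    rw [Finset.sum_comm]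
    calc ∑ k ∈ Finset.Icc 1 n, ∑ G : Matrix (Fin t) (Fin m) (ZMod 2),
            (wtCount (codeOf h G) k : ℚ) / (Nat.choose n k : ℚ)
        ≤ ∑ k ∈ Finset.Icc 1 n, (2 ^ ((t-1)*m) : ℚ) := by
          apply Finset.sum_le_sum
          intro k hk
          rw [Finset.mem_Icc] at hk
          have hc : (0 : ℚ) < (Nat.choose n k : ℚ) := by
            exact_mod_cast Nat.choose_pos hk.2
          rw [← Finset.sum_div, div_le_iff₀ hc]
          have := sum_wtCount h k hk.1
          calc (∑ G : Matrix (Fin t) (Fin m) (ZMod 2), (wtCount (codeOf h G) k : ℚ))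
              = ((∑ G : Matrix (Fin t) (Fin m) (ZMod 2), wtCount (codeOf h G) k : ℕ) : ℚ) := by
                push_cast; ring
            _ ≤ ((Nat.choose n k * 2 ^ ((t-1)*m) : ℕ) : ℚ) := by exact_mod_cast this
            _ = 2 ^ ((t-1)*m) * (Nat.choose n k : ℚ) := by push_cast; ring
      _ = (n : ℚ) * 2 ^ ((t-1)*m) := by
          rw [Finset.sum_const, Nat.card_Icc]
          simp [nsmul_eq_mul]
      _ = ∑ G : Matrix (Fin t) (Fin m) (ZMod 2), ((n : ℚ) / 2 ^ m) := by
          rw [Finset.sum_const, Finset.card_univ, card_matrix, nsmul_eq_mul]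
          have h2 : ((2:ℚ)) ^ (t*m) = 2 ^ ((t-1)*m) * 2 ^ m := by
            rw [← pow_add]
            congr 1
            have : (t-1)*m + m = t*m := by
              have := Nat.succ_pred_eq_of_pos ht1
              nlinarith [Nat.sub_add_cancel ht1]
            rw [this]
          push_cast
          rw [h2]
          field_simp
  obtain ⟨G, -, hG⟩ := Finset.exists_le_of_sum_le ⟨0, Finset.mem_univ 0⟩ hsum
  refine ⟨G, fun k hk1 hkn => ?_⟩
  have hterm : (wtCount (codeOf h G) k : ℚ) / (Nat.choose n k : ℚ) ≤ (n : ℚ) / 2 ^ m := by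
    refine le_trans ?_ hG
    rw [hF]
    apply Finset.single_le_sum (f := fun k => (wtCount (codeOf h G) k : ℚ) / (Nat.choose n k : ℚ))
    · intro i _
      positivity
    · rw [Finset.mem_Icc]; exact ⟨hk1, hkn⟩
  have hc : (0 : ℚ) < (Nat.choose n k : ℚ) := by exact_mod_cast Nat.choose_pos hkn
  have h2m : (0 : ℚ) < (2:ℚ) ^ m := by positivity
  rw [div_le_div_iff₀ hc h2m] at hterm
  have : ((wtCount (codeOf h G) k * 2 ^ m : ℕ) : ℚ) ≤ ((n * Nat.choose n k : ℕ) : ℚ) := by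
    push_cast
    linarith
  exact_mod_cast this


lemma wt_comp (x : Fin n → ZMod 2) (τ : Equiv.Perm (Fin n)) : wt (x ∘ ⇑τ) = wt x := by
  unfold wt
  apply Finset.card_bij' (i := fun a _ => τ a) (j := fun b _ => τ.symm b)
  · intro a ha; simpa using Finset.mem_filter.1 ha |>.2
  · intro b hb; simp only [Finset.mem_filter, Finset.mem_univ, true_and, Function.comp_apply,
      Equiv.apply_symm_apply]; simpa using Finset.mem_filter.1 hb |>.2
  · intros; simp
  · intros; simp

lemma exists_perm (x c : Fin n → ZMod 2) (hw : wt c = wt x) :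
    ∃ σ : Equiv.Perm (Fin n), x ∘ ⇑σ = c := by
  set p := fun i : Fin n => c i ≠ 0 with hp
  set q := fun i : Fin n => x i ≠ 0 with hq
  have hc1 : Fintype.card {i // p i} = Fintype.card {i // q i} := by
    rw [Fintype.card_subtype, Fintype.card_subtype]; exact hw
  have hc2 : Fintype.card {i // ¬ p i} = Fintype.card {i // ¬ q i} := by
    rw [Fintype.card_subtype_compl (p := p), Fintype.card_subtype_compl (p := q), hc1]
  refine ⟨(Equiv.sumCompl p).symm.trans
    (((Fintype.equivOfCardEq hc1).sumCongr (Fintype.equivOfCardEq hc2)).trans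
      (Equiv.sumCompl q)), ?_⟩
  funext i
  simp only [Function.comp_apply, Equiv.trans_apply]
  by_cases hpi : p i
  · have hs : (Equiv.sumCompl p).symm i = Sum.inl ⟨i, hpi⟩ := by
      rw [Equiv.symm_apply_eq, Equiv.sumCompl_apply_inl]
    rw [hs]
    simp only [Equiv.sumCongr_apply, Sum.map_inl, Equiv.sumCompl_apply_inl]
    have hx : x ((Fintype.equivOfCardEq hc1) ⟨i, hpi⟩ : Fin n) ≠ 0 :=
      ((Fintype.equivOfCardEq hc1) ⟨i, hpi⟩).2
    have hcc : c i ≠ 0 := hpi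
    have e1 : ∀ a : ZMod 2, a ≠ 0 → a = 1 := by decide
    rw [e1 _ hx, e1 _ hcc]
  · have hs : (Equiv.sumCompl p).symm i = Sum.inr ⟨i, hpi⟩ := by
      rw [Equiv.symm_apply_eq, Equiv.sumCompl_apply_inr]
    rw [hs]
    simp only [Equiv.sumCongr_apply, Sum.map_inr, Equiv.sumCompl_apply_inr]
    have hx : ¬ x ((Fintype.equivOfCardEq hc2) ⟨i, hpi⟩ : Fin n) ≠ 0 :=
      ((Fintype.equivOfCardEq hc2) ⟨i, hpi⟩).2
    have hcc : c i = 0 := by simpa [hp] using hpi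
    rw [not_not] at hx
    rw [hx, hcc]


noncomputable def stab (x : Fin n → ZMod 2) : Finset (Equiv.Perm (Fin n)) :=
  Finset.univ.filter (fun τ : Equiv.Perm (Fin n) => x ∘ ⇑τ = x)

lemma stab_mul_choose_le (x : Fin n → ZMod 2) :
    (stab x).card * Nat.choose n (wt x) ≤ Fintype.card (Equiv.Perm (Fin n)) := by
  classical
  set W : Finset (Fin n → ZMod 2) :=
    Finset.univ.filter (fun c : Fin n → ZMod 2 => wt c = wt x) with hW
  have hfib : Fintype.card (Equiv.Perm (Fin n))
      = ∑ c ∈ W, ((Finset.univ.filter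
          (fun σ : Equiv.Perm (Fin n) => x ∘ ⇑σ = c)).card) := by
    rw [← Finset.card_univ]
    apply Finset.card_eq_sum_card_fiberwise (f := fun σ : Equiv.Perm (Fin n) => x ∘ ⇑σ)
    intro σ _
    simp [hW, wt_comp]
  have hlow : ∀ c ∈ W, (stab x).card ≤
      (Finset.univ.filter (fun σ : Equiv.Perm (Fin n) => x ∘ ⇑σ = c)).card := by
    intro c hc
    rw [hW, Finset.mem_filter] at hc
    obtain ⟨σ₀, hσ₀⟩ := exists_perm x c hc.2
    apply Finset.card_le_card_of_injOn (f := fun τ => σ₀.trans τ)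
    · intro τ hτ
      simp only [Finset.mem_coe, stab, Finset.mem_filter] at hτ
      simp only [Finset.mem_coe, Finset.mem_filter, Finset.mem_univ, true_and]
      funext i
      have := congrFun hτ.2 (σ₀ i)
      simpa [hσ₀ ▸ congrFun hσ₀ i] using this.trans (congrFun hσ₀ i)
    · intro τ _ τ' _ hh
      dsimp only at hh
      apply Equiv.ext; intro i
      have := congrArg (fun e : Equiv.Perm (Fin n) => e (σ₀.symm i)) hh
      simpa using this
  calc (stab x).card * Nat.choose n (wt x)
      ≤ (stab x).card * W.card := by
        apply Nat.mul_le_mul_left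
        exact choose_le_card_wt (wt x)
    _ = ∑ _c ∈ W, (stab x).card := by rw [Finset.sum_const, smul_eq_mul, mul_comm]
    _ ≤ ∑ c ∈ W, ((Finset.univ.filter
          (fun σ : Equiv.Perm (Fin n) => x ∘ ⇑σ = c)).card) := Finset.sum_le_sum hlow
    _ = Fintype.card (Equiv.Perm (Fin n)) := hfib.symm


lemma mem_permCode (σ : Equiv.Perm (Fin n)) (C : Submodule (ZMod 2) (Fin n → ZMod 2))
    (x : Fin n → ZMod 2) : x ∈ permCode σ C ↔ x ∘ ⇑σ.symm ∈ C := by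
  rw [permCode, Submodule.mem_map]
  constructor
  · rintro ⟨c, hc, rfl⟩
    have : (LinearMap.funLeft (ZMod 2) (ZMod 2) ⇑σ) c ∘ ⇑σ.symm = c := by
      funext i; simp [LinearMap.funLeft_apply]
    rw [this]; exact hc
  · intro hc
    exact ⟨x ∘ ⇑σ.symm, hc, by funext i; simp [LinearMap.funLeft_apply]⟩

lemma cardS_le (C : Submodule (ZMod 2) (Fin n → ZMod 2)) (x : Fin n → ZMod 2) :
    (Finset.univ.filter (fun σ : Equiv.Perm (Fin n) => x ∘ ⇑σ.symm ∈ C)).card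
      ≤ (stab x).card * wtCount C (wt x) := by
  classical
  set S : Finset (Equiv.Perm (Fin n)) :=
    Finset.univ.filter (fun σ : Equiv.Perm (Fin n) => x ∘ ⇑σ.symm ∈ C) with hS
  have hfiber : ∀ c ∈ S.image (fun σ : Equiv.Perm (Fin n) => x ∘ ⇑σ.symm),
      (S.filter (fun σ : Equiv.Perm (Fin n) => x ∘ ⇑σ.symm = c)).card ≤ (stab x).card := by
    intro c hc
    rw [Finset.mem_image] at hc
    obtain ⟨σ₀, hσ₀, hc0⟩ := hc
    apply Finset.card_le_card_of_injOn (f := fun σ => σ₀.trans σ.symm)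
    · intro σ hσ
      rw [Finset.mem_coe, Finset.mem_filter] at hσ
      rw [Finset.mem_coe, stab, Finset.mem_filter]
      refine ⟨Finset.mem_univ _, ?_⟩
      funext i
      have h1 : x (σ.symm (σ₀ i)) = c (σ₀ i) := congrFun hσ.2 (σ₀ i)
      have h2 : c (σ₀ i) = x i := by
        rw [← hc0]; simp
      simpa using h1.trans h2
    · intro σ _ σ' _ hh
      dsimp only at hh
      have : ∀ j, σ.symm j = σ'.symm j := by
        intro j
        have := congrArg (fun e : Equiv.Perm (Fin n) => e (σ₀.symm j)) hh
        simpa using this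
      have hsymm : σ.symm = σ'.symm := Equiv.ext this
      rw [← Equiv.symm_symm σ, hsymm, Equiv.symm_symm]
  calc S.card ≤ (stab x).card * (S.image (fun σ : Equiv.Perm (Fin n) => x ∘ ⇑σ.symm)).card :=
        Finset.card_le_mul_card_image S _ hfiber
    _ ≤ (stab x).card * wtCount C (wt x) := by
        apply Nat.mul_le_mul_left
        rw [wtCount]
        apply Finset.card_le_card
        intro c hc
        rw [Finset.mem_image] at hc
        obtain ⟨σ, hσ, rfl⟩ := hc
        rw [hS, Finset.mem_filter] at hσ
        rw [Finset.mem_filter]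
        exact ⟨Finset.mem_univ _, hσ.2, wt_comp x σ.symm⟩


lemma wt_pos_of_ne {x : Fin n → ZMod 2} (hx : x ≠ 0) : 1 ≤ wt x := by
  rcases Nat.eq_zero_or_pos (wt x) with h0 | h1
  · exfalso
    apply hx
    rw [wt, Finset.card_eq_zero] at h0
    funext i
    have : i ∉ (Finset.univ.filter (fun i => x i ≠ 0)) := by rw [h0]; simp
    simpa using this
  · exact h1

lemma wt_le (x : Fin n → ZMod 2) : wt x ≤ n := by
  rw [wt]
  calc (Finset.univ.filter (fun i => x i ≠ 0)).card ≤ (Finset.univ : Finset (Fin n)).card :=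
        Finset.card_filter_le _ _
    _ = n := by simp

end Stmt10

/-- for every `1 ≤ t ≤ n` there is a `t`-dimensional code `C ⊆ F_2^n` whose
weight enumerator satisfies `A_k · 2^(n-t) < (n+1)·binom(n,k)` for all `1 ≤ k ≤ n`,
so that the permuted family `{σ(C)}` is `(n+1)`-almost universal₂. -/
theorem stmt10 {n t : ℕ} (hn : 1 ≤ n) (ht1 : 1 ≤ t) (htn : t ≤ n) :
    ∃ C : Submodule (ZMod 2) (Fin n → ZMod 2),
      Module.finrank (ZMod 2) C = t ∧
      (∀ k, 1 ≤ k → k ≤ n → wtCount C k * 2 ^ (n - t) < (n + 1) * Nat.choose n k) ∧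
      (∀ x : Fin n → ZMod 2, x ≠ 0 →
        pr (fun σ : Equiv.Perm (Fin n) => x ∈ permCode σ C) ≤
          ((n : ℝ) + 1) * ((2 : ℝ) ^ t / 2 ^ n)) := by
  classical
  have h : t + (n - t) = n := by omega
  obtain ⟨G, hG⟩ := Stmt10.exists_good_G h ht1
  refine ⟨Stmt10.codeOf h G, ?_, ?_, ?_⟩
  · rw [Stmt10.codeOf, LinearMap.finrank_range_of_inj (Stmt10.encL_inj h G)]
    simp [Module.finrank_pi]
  · intro k hk1 hkn
    have hA := hG k hk1 hkn
    have hcpos : 0 < Nat.choose n k := Nat.choose_pos hkn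
    calc wtCount (Stmt10.codeOf h G) k * 2 ^ (n - t) ≤ n * Nat.choose n k := hA
      _ < (n + 1) * Nat.choose n k := by
          exact (Nat.mul_lt_mul_right hcpos).mpr (by omega)
  · intro x hx
    set C := Stmt10.codeOf h G with hC
    set k := wt x with hk
    have hk1 : 1 ≤ k := Stmt10.wt_pos_of_ne hx
    have hkn : k ≤ n := Stmt10.wt_le x
    have hA := hG k hk1 hkn
    have hfil : (Finset.univ.filter (fun σ : Equiv.Perm (Fin n) => x ∈ permCode σ C))
        = (Finset.univ.filter (fun σ : Equiv.Perm (Fin n) => x ∘ ⇑σ.symm ∈ C)) := by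
      apply Finset.filter_congr
      intro σ _
      exact Stmt10.mem_permCode σ C x
    set a := (Finset.univ.filter (fun σ : Equiv.Perm (Fin n) => x ∘ ⇑σ.symm ∈ C)).card with ha
    set N := Fintype.card (Equiv.Perm (Fin n)) with hN
    have h1 : a ≤ (Stmt10.stab x).card * wtCount C k := Stmt10.cardS_le C x
    have h2 : (Stmt10.stab x).card * Nat.choose n k ≤ N := Stmt10.stab_mul_choose_le x
    have key : a * 2 ^ (n - t) * Nat.choose n k ≤ n * N * Nat.choose n k := by
      calc a * 2 ^ (n - t) * Nat.choose n k
          ≤ ((Stmt10.stab x).card * wtCount C k) * 2 ^ (n - t) * Nat.choose n k := by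
            apply Nat.mul_le_mul_right
            exact Nat.mul_le_mul_right _ h1
        _ = ((Stmt10.stab x).card * Nat.choose n k) * (wtCount C k * 2 ^ (n - t)) := by ring
        _ ≤ N * (n * Nat.choose n k) := Nat.mul_le_mul h2 hA
        _ = n * N * Nat.choose n k := by ring
    have hcpos : 0 < Nat.choose n k := Nat.choose_pos hkn
    have key2 : a * 2 ^ (n - t) ≤ n * N := Nat.le_of_mul_le_mul_right key hcpos
    have hNpos : 0 < N := Fintype.card_pos
    have h2m : (0:ℝ) < 2 ^ (n - t) := by positivity
    have h2n : (0:ℝ) < 2 ^ n := by positivity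
    have step1 : pr (fun σ : Equiv.Perm (Fin n) => x ∈ permCode σ C) ≤ (n : ℝ) / 2 ^ (n - t) := by
      rw [pr]
      rw [show (Finset.univ.filter (fun σ : Equiv.Perm (Fin n) => x ∈ permCode σ C)).card = a from by rw [ha, hfil]]
      rw [div_le_div_iff₀ (by exact_mod_cast hNpos) h2m]
      exact_mod_cast key2
    refine step1.trans ?_
    have hkey : (2:ℝ) ^ t * 2 ^ (n - t) = 2 ^ n := by
      rw [← pow_add, h]
    rw [div_le_iff₀ h2m]
    have hexp : ((n:ℝ) + 1) * ((2:ℝ) ^ t / 2 ^ n) * 2 ^ (n - t) = (n:ℝ) + 1 := by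
      field_simp
      linear_combination hkey
    rw [hexp]
    linarith
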